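/- arXiv:2308.10474 — 5 statements merged into one kernel-verified Lean document; each statement's English description precedes it below -/
import Mathlib

section
/- Let Λ = ℤ_p[[T]] and let X = Λ/(f) where f = a_n T^n + a_{n+1} T^{n+1} + ⋯ ∈ Λ with a_n ≠ 0. Then for any r ≥ n, the submodule (T^r X)[T] (elements of T^r X killed by T) is trivial. -/
/-- Let `Λ = ℤ_p[[T]]` and `X = Λ/(f)` where `f = aₙTⁿ + aₙ₊₁Tⁿ⁺¹ + ⋯` with `aₙ ≠ 0`.
Then for any `r ≥ n`, the `T`-torsion of `TʳX` is trivial: any element of `X` that is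
a multiple of `Tʳ` and is killed by `T` is zero. -/
theorem trX_torsion_trivial (p : ℕ) [Fact p.Prime] (f : PowerSeries ℤ_[p]) (n : ℕ)
    (han : PowerSeries.coeff (R := ℤ_[p]) n f ≠ 0)
    (hlow : ∀ k < n, PowerSeries.coeff (R := ℤ_[p]) k f = 0)
    (r : ℕ) (hr : n ≤ r)
    (m : PowerSeries ℤ_[p] ⧸ Ideal.span {f})
    (hm : ∃ y : PowerSeries ℤ_[p] ⧸ Ideal.span {f},
      ((PowerSeries.X : PowerSeries ℤ_[p]) ^ r) • y = m)
    (hkill : (PowerSeries.X : PowerSeries ℤ_[p]) • m = 0) :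
    m = 0 := by
  obtain ⟨y, rfl⟩ := hm
  obtain ⟨g, rfl⟩ := Ideal.Quotient.mk_surjective y
  -- f = X^n * f₀ with constant coeff of f₀ nonzero
  obtain ⟨f₀, hf₀⟩ := PowerSeries.X_pow_dvd_iff.mpr hlow
  have hc0 : PowerSeries.coeff (R := ℤ_[p]) 0 f₀ ≠ 0 := by
    intro h
    apply han
    rw [hf₀]
    simpa using (PowerSeries.coeff_X_pow_mul f₀ n 0).trans h
  have hXnd : ¬ (PowerSeries.X : PowerSeries ℤ_[p]) ∣ f₀ := by
    rw [PowerSeries.X_dvd_iff, ← PowerSeries.coeff_zero_eq_constantCoeff_apply]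
    exact hc0
  -- X^(r+1) * g ∈ span {f}
  have hker : f ∣ PowerSeries.X ^ (r + 1) * g := by
    rw [← Ideal.mem_span_singleton]
    have heq : (Ideal.Quotient.mk (Ideal.span {f})) (PowerSeries.X ^ (r + 1) * g)
        = (PowerSeries.X : PowerSeries ℤ_[p]) • ((PowerSeries.X : PowerSeries ℤ_[p]) ^ r •
            (Ideal.Quotient.mk (Ideal.span {f})) g) := by
      simp only [← Ideal.Quotient.mk_eq_mk, ← Submodule.Quotient.mk_smul, smul_eq_mul, ← mul_assoc, ← pow_succ']
    have : (Ideal.Quotient.mk (Ideal.span {f})) (PowerSeries.X ^ (r + 1) * g) = 0 := by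
      rw [heq, hkill]
    rwa [Ideal.Quotient.eq_zero_iff_mem] at this
  obtain ⟨h, hh⟩ := hker
  rw [hf₀] at hh
  -- cancel X^n : X^(r+1-n) * g = f₀ * h
  have hXne : (PowerSeries.X : PowerSeries ℤ_[p]) ^ n ≠ 0 :=
    pow_ne_zero _ PowerSeries.X_ne_zero
  have key : PowerSeries.X ^ (r + 1 - n) * g = f₀ * h := by
    apply mul_left_cancel₀ hXne
    rw [← mul_assoc, ← pow_add, ← mul_assoc]
    rw [Nat.add_sub_cancel' (le_trans hr (Nat.le_succ r))]
    exact hh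
  -- X divides LHS, so X ∣ h
  have hXdvd : (PowerSeries.X : PowerSeries ℤ_[p]) ∣ f₀ * h := by
    rw [← key]
    exact Dvd.dvd.mul_right (dvd_pow_self _ (by omega)) g
  have hXh : (PowerSeries.X : PowerSeries ℤ_[p]) ∣ h :=
    (PowerSeries.X_prime.dvd_mul.mp hXdvd).resolve_left hXnd
  obtain ⟨h', rfl⟩ := hXh
  have key2 : PowerSeries.X ^ (r - n) * g = f₀ * h' := by
    apply mul_left_cancel₀ (PowerSeries.X_ne_zero (R := ℤ_[p]))
    calc PowerSeries.X * (PowerSeries.X ^ (r - n) * g)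
        = PowerSeries.X ^ (r + 1 - n) * g := by
          rw [← mul_assoc, ← pow_succ']
          congr 2
          omega
      _ = f₀ * (PowerSeries.X * h') := key
      _ = PowerSeries.X * (f₀ * h') := by ring
  -- conclude f ∣ X^r * g
  have hfin : f ∣ PowerSeries.X ^ r * g := by
    refine ⟨h', ?_⟩
    rw [hf₀, mul_assoc, ← key2, ← mul_assoc, ← pow_add]
    congr 2
    omega
  rw [← Ideal.mem_span_singleton] at hfin
  have : (Ideal.Quotient.mk (Ideal.span {f})) (PowerSeries.X ^ r * g) = 0 :=
    (Ideal.Quotient.eq_zero_iff_mem).mpr hfin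
  calc (PowerSeries.X : PowerSeries ℤ_[p]) ^ r • (Ideal.Quotient.mk (Ideal.span {f})) g
      = (Ideal.Quotient.mk (Ideal.span {f})) (PowerSeries.X ^ r * g) := by
        rw [← Ideal.Quotient.mk_eq_mk, ← Submodule.Quotient.mk_smul, smul_eq_mul, Ideal.Quotient.mk_eq_mk]
    _ = 0 := this
end

section
/- Let Λ = ℤ_p[[T]] and let X = Λ/(f) where f = a_n T^n + a_{n+1} T^{n+1} + ⋯ ∈ Λ with a_n ≠ 0. Then for any r ≥ n, the quotient T^r X / T^{r+1} X is isomorphic as a ℤ_p-module to ℤ_p/(a_n). -/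
open PowerSeries

set_option synthInstance.maxHeartbeats 1000000
set_option maxHeartbeats 2000000

/-- The submodule `TʳX ⊆ X = ℤ_p[[T]]/(f)`, i.e. the image of multiplication by `Tʳ`
(here `T` is the power series variable `X`), viewed as a `ℤ_p`-submodule. -/
noncomputable def TrX (p : ℕ) [Fact p.Prime] (f : PowerSeries ℤ_[p]) (r : ℕ) :
    Submodule ℤ_[p] (PowerSeries ℤ_[p] ⧸ Ideal.span {f}) :=
  LinearMap.range (LinearMap.mulLeft ℤ_[p]
    (Ideal.Quotient.mk (Ideal.span {f}) ((PowerSeries.X : PowerSeries ℤ_[p]) ^ r)))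

section Aux

variable (p : ℕ) [Fact p.Prime] (f : PowerSeries ℤ_[p]) (r : ℕ)

theorem mem_TrX {y : PowerSeries ℤ_[p] ⧸ Ideal.span {f}} :
    y ∈ TrX p f r ↔ ∃ z, Ideal.Quotient.mk (Ideal.span {f}) (X ^ r) * z = y := by
  simp [TrX, LinearMap.mem_range]

theorem mk_smul (a : ℤ_[p]) (x : PowerSeries ℤ_[p]) :
    a • Ideal.Quotient.mk (Ideal.span {f}) x
      = Ideal.Quotient.mk (Ideal.span {f}) (C a * x) := by
  rw [C_eq_algebraMap, ← Algebra.smul_def]; rfl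

end Aux

/-- Let `Λ = ℤ_p[[T]]` and `X = Λ/(f)` where `f = aₙTⁿ + aₙ₊₁Tⁿ⁺¹ + ⋯` with `aₙ ≠ 0`.
Then for any `r ≥ n`, the quotient `TʳX / Tʳ⁺¹X` is isomorphic as a `ℤ_p`-module to
`ℤ_p/(aₙ)`. -/
theorem trX_quot_iso (p : ℕ) [Fact p.Prime] (f : PowerSeries ℤ_[p]) (n : ℕ)
    (han : PowerSeries.coeff n f ≠ 0)
    (hlow : ∀ k < n, PowerSeries.coeff k f = 0)
    (r : ℕ) (hr : n ≤ r) :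
    Nonempty ((↥(TrX p f r) ⧸
        Submodule.comap (TrX p f r).subtype (TrX p f (r + 1)))
      ≃ₗ[ℤ_[p]] (ℤ_[p] ⧸ Ideal.span {PowerSeries.coeff n f})) := by
  set I := Ideal.span {f} with hI
  set mk := Ideal.Quotient.mk I with hmk
  obtain ⟨g, hg⟩ : (X : PowerSeries ℤ_[p]) ^ n ∣ f := X_pow_dvd_iff.mpr hlow
  have hg0 : constantCoeff g = PowerSeries.coeff n f := by
    rw [hg, ← coeff_zero_eq_constantCoeff_apply]
    simpa using (coeff_X_pow_mul g n 0).symm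
  have hgne : constantCoeff g ≠ 0 := hg0 ▸ han
  set N : Submodule ℤ_[p] ↥(TrX p f r) :=
    Submodule.comap (TrX p f r).subtype (TrX p f (r + 1)) with hN
  have htmem : mk (X ^ r) ∈ TrX p f r := (mem_TrX p f r).mpr ⟨1, mul_one _⟩
  set t : ↥(TrX p f r) := ⟨mk (X ^ r), htmem⟩ with ht
  set ψ : ℤ_[p] →ₗ[ℤ_[p]] (↥(TrX p f r) ⧸ N) :=
    N.mkQ ∘ₗ LinearMap.toSpanSingleton ℤ_[p] _ t with hψ
  have hψval : ∀ a : ℤ_[p], ((a • t : ↥(TrX p f r)) : PowerSeries ℤ_[p] ⧸ I)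
      = mk (C a * X ^ r) := by
    intro a
    rw [Submodule.coe_smul, ht, mk_smul]
  -- surjectivity
  have hsurj : Function.Surjective ψ := by
    intro y
    obtain ⟨x, rfl⟩ := Submodule.Quotient.mk_surjective N y
    obtain ⟨x, hx⟩ := x
    obtain ⟨z, hz⟩ := (mem_TrX p f r).mp hx
    obtain ⟨h, rfl⟩ := Ideal.Quotient.mk_surjective z
    refine ⟨constantCoeff h, ?_⟩
    rw [hψ]
    simp only [LinearMap.coe_comp, Function.comp_apply, LinearMap.toSpanSingleton_apply,
      Submodule.mkQ_apply]
    rw [Submodule.Quotient.eq]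
    refine (mem_TrX p f (r+1)).mpr ?_
    obtain ⟨h', hh'⟩ : (X : PowerSeries ℤ_[p]) ∣ (C (constantCoeff h) - h) := by
      rw [X_dvd_iff]; simp
    refine ⟨mk h', ?_⟩
    have key : (↑(constantCoeff h • t) - x : PowerSeries ℤ_[p] ⧸ I)
        = mk (X ^ r * (C (constantCoeff h) - h)) := by
      rw [hψval, ← hz, ← map_mul, ← map_sub]
      congr 1; ring
    rw [Submodule.subtype_apply, Submodule.coe_sub, key, ← map_mul, hh']
    congr 1; ring
  -- kernel
  have hker : LinearMap.ker ψ = Ideal.span {PowerSeries.coeff n f} := by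
    ext a
    simp only [LinearMap.mem_ker, hψ, LinearMap.coe_comp, Function.comp_apply,
      LinearMap.toSpanSingleton_apply, Submodule.mkQ_apply, Submodule.Quotient.mk_eq_zero,
      hN, Submodule.mem_comap, Submodule.subtype_apply]
    rw [hψval, mem_TrX, Ideal.mem_span_singleton]
    constructor
    · rintro ⟨z, hz⟩
      obtain ⟨q, rfl⟩ := Ideal.Quotient.mk_surjective z
      rw [← map_mul, Ideal.Quotient.eq, Ideal.mem_span_singleton] at hz
      obtain ⟨w, hw⟩ := hz
      obtain ⟨k, hrk⟩ : ∃ k, r = n + k := ⟨r - n, by omega⟩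
      have hXn : (X : PowerSeries ℤ_[p]) ^ n ≠ 0 := pow_ne_zero _ X_ne_zero
      have key : g * w = X ^ (k+1) * q - C a * X ^ k := by
        apply mul_left_cancel₀ hXn
        have h0 : X ^ (r+1) * q - C a * X ^ r = X ^ n * g * w := by rw [← hg, ← hw]
        rw [hrk] at h0
        calc (X : PowerSeries ℤ_[p]) ^ n * (g * w) = X ^ n * g * w := by ring
          _ = X ^ (n+k+1) * q - C a * X ^ (n+k) := h0.symm
          _ = X ^ n * (X ^ (k+1) * q - C a * X ^ k) := by ring
      have hdvd : (X : PowerSeries ℤ_[p]) ^ k ∣ g * w := by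
        rw [key]
        exact dvd_sub ((pow_dvd_pow X (by omega)).mul_right q) (dvd_mul_left _ _)
      have hordg : g.order = 0 := by
        refine le_antisymm ?_ (zero_le)
        simpa using order_le 0 (by simpa using hgne)
      have hordw : (k : ℕ∞) ≤ w.order := by
        have h1 : (k : ℕ∞) ≤ (g * w).order :=
          nat_le_order _ _ (fun i hi => X_pow_dvd_iff.mp hdvd i hi)
        rwa [order_mul, hordg, zero_add] at h1
      obtain ⟨w', hw'⟩ : (X : PowerSeries ℤ_[p]) ^ k ∣ w :=
        X_pow_dvd_iff.mpr fun m hm =>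
          coeff_of_lt_order m (lt_of_lt_of_le (by exact_mod_cast hm) hordw)
      have hck : PowerSeries.coeff k (g * w)
          = constantCoeff g * constantCoeff w' := by
        rw [hw', show g * ((X : PowerSeries ℤ_[p]) ^ k * w') = X ^ k * (g * w') by ring]
        have := coeff_X_pow_mul (g * w') k 0
        simpa [map_mul] using this
      have hck2 : PowerSeries.coeff k (g * w) = -a := by
        rw [key, map_sub]
        have h1 : PowerSeries.coeff k ((X : PowerSeries ℤ_[p]) ^ (k+1) * q) = 0 :=
          X_pow_dvd_iff.mp (dvd_mul_right _ q) k (by omega)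
        have h2 : PowerSeries.coeff k (C a * (X : PowerSeries ℤ_[p]) ^ k) = a := by
          simp [coeff_C_mul, coeff_X_pow]
        rw [h1, h2]; ring
      refine ⟨-(constantCoeff w'), ?_⟩
      rw [← hg0]
      rw [hck] at hck2
      linear_combination hck2
    · rintro ⟨c, hc⟩
      obtain ⟨g', hg'⟩ : (X : PowerSeries ℤ_[p]) ∣ (g - C (constantCoeff g)) := by
        rw [X_dvd_iff]; simp
      obtain ⟨m, hrm⟩ : ∃ m, r = m + n := ⟨r - n, by omega⟩
      refine ⟨mk (-(C c * g')), ?_⟩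
      rw [← map_mul, Ideal.Quotient.eq, Ideal.mem_span_singleton]
      refine ⟨-(C c * X ^ m), ?_⟩
      have hgsplit : g = X * g' + C (constantCoeff g) := by
        rw [← hg']; ring
      have ha : C a = C c * C (constantCoeff g) := by
        rw [← map_mul, hc, hg0]; ring_nf
      calc (X : PowerSeries ℤ_[p]) ^ (r+1) * (-(C c * g')) - C a * X ^ r
          = -(C c * ((X : PowerSeries ℤ_[p]) * g'
              + C (constantCoeff g)) * X ^ r) := by
            rw [ha]; ring
        _ = -(C c * g * X ^ r) := by rw [← hgsplit]
        _ = f * (-(C c * X ^ m)) := by rw [hg, hrm]; ring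
  exact ⟨(ψ.quotKerEquivOfSurjective hsurj).symm.trans (Submodule.quotEquivOfEq _ _ hker)⟩
end

section
/- Let Λ = ℤ_p[[T]] and let X = Λ/(f) with f ∈ Λ, f ≠ 0, and n = ord_T(f) (the order of vanishing of f at T = 0). Then for any r ≥ n, the quotient T^r X / T^{r+1} X is finite, with cardinality equal to the cardinality of ℤ_p/(a_n) where a_n is the coefficient of T^n in f. -/
open PowerSeries

set_option synthInstance.maxHeartbeats 1000000
set_option maxHeartbeats 2000000

lemma key_coeff {R : Type*} [CommRing R] [IsDomain R] (f u v : R⟦X⟧) (n : ℕ)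
    (hfn : ∀ i < n, coeff i f = 0) (hA : coeff n f ≠ 0) (c : R) (r : ℕ) (hr : n ≤ r)
    (heq : C c * X ^ r = X ^ (r + 1) * u + f * v) :
    c = coeff n f * coeff (r - n) v := by
  have hXu : ∀ m, m < r + 1 → coeff m (X ^ (r+1) * u) = 0 := fun m hm =>
    X_pow_dvd_iff.mp (Dvd.intro u rfl) m hm
  have hv : ∀ m, m < r - n → coeff m v = 0 := by
    intro m
    induction m using Nat.strong_induction_on with
    | _ m ih =>
      intro hm
      have h1 : coeff (n + m) (C c * X ^ r) = 0 := by
        rw [coeff_C_mul, coeff_X_pow, if_neg (by omega), mul_zero]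
      have h2 := congrArg (coeff (n + m)) heq
      rw [h1, map_add, hXu _ (by omega), zero_add, coeff_mul] at h2
      rw [Finset.sum_eq_single (n, m)] at h2
      · exact (mul_eq_zero.mp h2.symm).resolve_left hA
      · rintro ⟨i, j⟩ hij hne
        simp only [Finset.HasAntidiagonal.mem_antidiagonal] at hij
        rcases lt_or_ge i n with h | h
        · rw [hfn i h, zero_mul]
        · rcases eq_or_lt_of_le h with h' | h'
          · exact absurd (Prod.ext_iff.mpr ⟨by omega, by omega⟩) hne
          · rw [ih j (by omega) (by omega), mul_zero]
      · intro h; exact absurd (Finset.HasAntidiagonal.mem_antidiagonal.mpr (by simp)) h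
  have h2 := congrArg (coeff r) heq
  rw [coeff_C_mul, coeff_X_pow, if_pos rfl, mul_one, map_add, hXu _ (by omega), zero_add,
    coeff_mul] at h2
  rw [Finset.sum_eq_single (n, r - n)] at h2
  · exact h2
  · rintro ⟨i, j⟩ hij hne
    simp only [Finset.HasAntidiagonal.mem_antidiagonal] at hij
    rcases lt_or_ge i n with h | h
    · rw [hfn i h, zero_mul]
    · rcases eq_or_lt_of_le h with h' | h'
      · exact absurd (Prod.ext_iff.mpr ⟨by omega, by omega⟩) hne
      · rw [hv j (by omega), mul_zero]
  · intro h; exact absurd (Finset.HasAntidiagonal.mem_antidiagonal.mpr (by simp; omega)) h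

lemma padic_fin_quot (p : ℕ) [Fact p.Prime] (a : ℤ_[p]) (ha : a ≠ 0) :
    Finite (ℤ_[p] ⧸ Ideal.span {a}) := by
  have h1 : Ideal.span {a} = Ideal.span {(p : ℤ_[p]) ^ a.valuation} := by
    rw [Ideal.span_singleton_eq_span_singleton]
    exact ⟨(PadicInt.unitCoeff ha)⁻¹, by
      rw [Units.mul_inv_eq_iff_eq_mul, mul_comm]
      exact PadicInt.unitCoeff_spec ha⟩
  rw [h1, ← PadicInt.ker_toZModPow]
  exact Finite.of_equiv _ (RingHom.quotientKerEquivOfSurjective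
    (ZMod.ringHom_surjective (PadicInt.toZModPow (p:=p) a.valuation))).toEquiv.symm

/-- Let `Λ = ℤ_p[[T]]`, `X = Λ/(f)` with `f ≠ 0` and `n = ord_T(f)` (formalized as
`f.order = n`, i.e. the largest `n` with `f ∈ (Tⁿ)`).  Then for any `r ≥ n`, the quotient
`TʳX / Tʳ⁺¹X` is finite, with cardinality equal to the cardinality of `ℤ_p/(aₙ)` where
`aₙ` is the coefficient of `Tⁿ` in `f`. -/
theorem trX_quot_finite_card (p : ℕ) [Fact p.Prime] (f : PowerSeries ℤ_[p]) (hf : f ≠ 0)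
    (n : ℕ) (hn : f.order = n) (r : ℕ) (hr : n ≤ r) :
    Finite (↥(TrX p f r) ⧸ Submodule.comap (TrX p f r).subtype (TrX p f (r + 1))) ∧
    Nat.card (↥(TrX p f r) ⧸ Submodule.comap (TrX p f r).subtype (TrX p f (r + 1))) =
      Nat.card (ℤ_[p] ⧸ Ideal.span {PowerSeries.coeff n f}) := by
  set A := coeff n f with hAdef
  have hA : A ≠ 0 := (order_eq_nat.mp hn).1
  have hfn : ∀ i < n, coeff i f = 0 := (order_eq_nat.mp hn).2
  obtain ⟨g, hg⟩ : (X : ℤ_[p]⟦X⟧) ^ n ∣ f := X_pow_dvd_iff.mpr hfn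
  have hg0 : constantCoeff g = A := by
    have := coeff_X_pow_mul g n 0
    rw [← hg, zero_add] at this
    simpa using this.symm
  set sg : ℤ_[p]⟦X⟧ := PowerSeries.mk fun q => coeff (q + 1) g with hsgdef
  have hgdec : g = X * sg + C A := by rw [← hg0]; exact eq_X_mul_shift_add_const g
  set π := Ideal.Quotient.mk (Ideal.span {f}) with hπ
  set m : (ℤ_[p]⟦X⟧ ⧸ Ideal.span {f}) →ₗ[ℤ_[p]] (ℤ_[p]⟦X⟧ ⧸ Ideal.span {f}) :=
    LinearMap.mulLeft ℤ_[p] (π (X ^ r)) with hm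
  set φ : ℤ_[p] →ₗ[ℤ_[p]] ↥(TrX p f r) :=
    LinearMap.codRestrict (TrX p f r)
      (m.comp (Algebra.linearMap ℤ_[p] (ℤ_[p]⟦X⟧ ⧸ Ideal.span {f})))
      (fun c => ⟨Algebra.linearMap ℤ_[p] _ c, rfl⟩) with hφ
  set Qm := Submodule.comap (TrX p f r).subtype (TrX p f (r + 1)) with hQm
  set ψ : ℤ_[p] →ₗ[ℤ_[p]] (↥(TrX p f r) ⧸ Qm) := Qm.mkQ.comp φ with hψ
  have hφcoe : ∀ c : ℤ_[p], ((φ c : ↥(TrX p f r)) : ℤ_[p]⟦X⟧ ⧸ Ideal.span {f})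
      = π (X ^ r) * π (C c) := fun c => rfl
  have hsurj : Function.Surjective ψ := by
    intro q
    obtain ⟨x, rfl⟩ := Submodule.Quotient.mk_surjective Qm q
    obtain ⟨y, hy⟩ := x.2
    obtain ⟨h, rfl⟩ := Ideal.Quotient.mk_surjective y
    refine ⟨constantCoeff h, ?_⟩
    show Submodule.Quotient.mk (φ _) = Submodule.Quotient.mk x
    rw [Submodule.Quotient.eq]
    show ((φ _ - x : ↥(TrX p f r)) : ℤ_[p]⟦X⟧ ⧸ Ideal.span {f}) ∈ TrX p f (r + 1)
    refine ⟨π (-(PowerSeries.mk fun q => coeff (q + 1) h)), ?_⟩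
    have hcx : ((φ (constantCoeff h) - x : ↥(TrX p f r)) : ℤ_[p]⟦X⟧ ⧸ Ideal.span {f})
        = π (X ^ r) * π (C (constantCoeff h)) - π (X ^ r) * π h := by
      rw [Submodule.coe_sub, hφcoe, ← hy]; rfl
    show π (X ^ (r + 1)) * π (-(PowerSeries.mk fun q => coeff (q + 1) h)) = _
    rw [hcx, ← map_mul, ← map_mul, ← map_mul, ← map_sub]
    congr 1
    have hh := sub_const_eq_X_mul_shift h
    linear_combination (X : ℤ_[p]⟦X⟧) ^ r * hh
  have hker : LinearMap.ker ψ = Ideal.span {A} := by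
    ext c
    constructor
    · intro hc
      have hc2 : ((φ c : ↥(TrX p f r)) : ℤ_[p]⟦X⟧ ⧸ Ideal.span {f}) ∈ TrX p f (r + 1) := by
        have : φ c ∈ Qm := by
          rwa [LinearMap.mem_ker, hψ, LinearMap.comp_apply, Submodule.mkQ_apply,
            Submodule.Quotient.mk_eq_zero] at hc
        exact this
      obtain ⟨y, hy⟩ := hc2
      obtain ⟨v, rfl⟩ := Ideal.Quotient.mk_surjective y
      rw [hφcoe] at hy
      have hy2 : π (X ^ (r + 1) * v) = π (X ^ r * C c) := by
        rw [map_mul, map_mul]; exact hy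
      have hmem : X ^ (r + 1) * v - X ^ r * C c ∈ Ideal.span {f} :=
        Ideal.Quotient.eq.mp hy2
      obtain ⟨a, ha⟩ := Ideal.mem_span_singleton'.mp hmem
      have heq : C c * X ^ r = X ^ (r + 1) * v + f * (-a) := by
        linear_combination ha
      rw [key_coeff f v (-a) n hfn hA c r hr heq]
      exact Ideal.mem_span_singleton'.mpr ⟨coeff (r - n) (-a), mul_comm _ _⟩
    · intro hc
      refine (Ideal.span_le.mpr (Set.singleton_subset_iff.mpr ?_)) hc
      rw [SetLike.mem_coe, LinearMap.mem_ker, hψ, LinearMap.comp_apply, Submodule.mkQ_apply, Submodule.Quotient.mk_eq_zero]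
      show ((φ A : ↥(TrX p f r)) : ℤ_[p]⟦X⟧ ⧸ Ideal.span {f}) ∈ TrX p f (r + 1)
      refine ⟨π (-sg), ?_⟩
      show π (X ^ (r + 1)) * π (-sg) = _
      rw [hφcoe, ← map_mul, ← map_mul]
      rw [Ideal.Quotient.mk_eq_mk_iff_sub_mem]
      refine Ideal.mem_span_singleton'.mpr ⟨-(X ^ (r - n)), ?_⟩
      have hx : (X : ℤ_[p]⟦X⟧) ^ (r - n) * X ^ n = X ^ r := by
        rw [← pow_add, Nat.sub_add_cancel hr]
      rw [hg, hgdec]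
      linear_combination (-((X : ℤ_[p]⟦X⟧) * sg + C A)) * hx
  have e := LinearMap.quotKerEquivOfSurjective ψ hsurj
  rw [hker] at e
  have hfin : Finite (ℤ_[p] ⧸ Ideal.span {A}) := padic_fin_quot p A hA
  refine ⟨Finite.of_equiv _ e.toEquiv, ?_⟩
  exact (Nat.card_congr e.toEquiv).symm
end

section
/- Let 0 → A →^h B → C → 0 be an exact sequence of finitely generated ℤ_p-modules. Then #(A_tor) · #(C_tor) equals det*(h) · #(B_tor) up to a p-adic unit, where det*(h) is the product of the nonzero elementary divisors (entries in the Smith normal form) of the induced map A/A_tor → B/B_tor. -/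
/-- A module homomorphism maps torsion elements to torsion elements. -/
theorem torsion_le_comap_torsion {R M N : Type*} [CommRing R]
    [AddCommGroup M] [AddCommGroup N] [Module R M] [Module R N] (h : M →ₗ[R] N) :
    Submodule.torsion R M ≤ (Submodule.torsion R N).comap h := by
  rintro x ⟨a, ha⟩
  refine Submodule.mem_comap.mpr ⟨a, ?_⟩
  rw [Submonoid.smul_def] at ha ⊢
  rw [← map_smul, ha, map_zero]

/-- The induced map `A/A_tor → B/B_tor` of a `ℤ_p`-linear map `h : A → B`. -/
noncomputable def inducedTorsionFree (p : ℕ) [Fact p.Prime] {A B : Type*}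
    [AddCommGroup A] [AddCommGroup B] [Module ℤ_[p] A] [Module ℤ_[p] B]
    (h : A →ₗ[ℤ_[p]] B) :
    (A ⧸ Submodule.torsion ℤ_[p] A) →ₗ[ℤ_[p]] (B ⧸ Submodule.torsion ℤ_[p] B) :=
  Submodule.mapQ _ _ h (torsion_le_comap_torsion h)

section Aux

variable {R M N : Type*} [CommRing R] [AddCommGroup M] [AddCommGroup N]
  [Module R M] [Module R N]

lemma aux_card_eq_card_quotient_mul_card (q : Submodule R M) :
    Nat.card M = Nat.card (M ⧸ q) * Nat.card q :=
  AddSubgroup.card_eq_card_quotient_mul_card_addSubgroup q.toAddSubgroup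

lemma aux_card_eq_card_ker_mul_card_range (f : M →ₗ[R] N) :
    Nat.card M = Nat.card (LinearMap.ker f) * Nat.card (LinearMap.range f) := by
  rw [aux_card_eq_card_quotient_mul_card (LinearMap.ker f),
    Nat.card_congr (f.quotKerEquivRange).toEquiv, mul_comm]

/-- A linear equivalence restricts to an equivalence of torsion submodules. -/
def torsionEquivOfLinearEquiv (e : M ≃ₗ[R] N) :
    Submodule.torsion R M ≃ Submodule.torsion R N where
  toFun x := ⟨e x, torsion_le_comap_torsion e.toLinearMap x.2⟩
  invFun y := ⟨e.symm y, torsion_le_comap_torsion e.symm.toLinearMap y.2⟩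
  left_inv x := by ext; simp
  right_inv y := by ext; simp

end Aux

/-- Let `0 → A →ʰ B → C → 0` be an exact sequence of finitely generated `ℤ_p`-modules.
Then `#(A_tor) · #(C_tor) = det*(h) · #(B_tor)` up to a `p`-adic unit.  Here `det*(h)`,
the product of the nonzero elementary divisors (Smith normal form entries) of the induced
map `A/A_tor → B/B_tor`, has `p`-adic valuation equal to the length of the torsion part of
the cokernel of that induced map; equality up to a `p`-adic unit is therefore formalized as
the equality of the corresponding (finite) cardinalities, all of which are powers of `p`. -/
theorem card_torsion_exact_seq (p : ℕ) [Fact p.Prime] {A B C : Type*}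
    [AddCommGroup A] [AddCommGroup B] [AddCommGroup C]
    [Module ℤ_[p] A] [Module ℤ_[p] B] [Module ℤ_[p] C]
    [Module.Finite ℤ_[p] A] [Module.Finite ℤ_[p] B] [Module.Finite ℤ_[p] C]
    (h : A →ₗ[ℤ_[p]] B) (π : B →ₗ[ℤ_[p]] C)
    (hinj : Function.Injective h) (hsurj : Function.Surjective π)
    (hex : LinearMap.range h = LinearMap.ker π) :
    Nat.card ↥(Submodule.torsion ℤ_[p] A) * Nat.card ↥(Submodule.torsion ℤ_[p] C) =
      Nat.card ↥(Submodule.torsion ℤ_[p]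
          ((B ⧸ Submodule.torsion ℤ_[p] B) ⧸ LinearMap.range (inducedTorsionFree p h))) *
        Nat.card ↥(Submodule.torsion ℤ_[p] B) := by
  classical
  set R := ℤ_[p]
  set TA := Submodule.torsion R A with hTA
  set TB := Submodule.torsion R B with hTB
  set TC := Submodule.torsion R C with hTC
  -- S := π(T(B)) ≤ T(C)
  set S : Submodule R C := TB.map π with hSdef
  have hS : S ≤ TC := by
    rw [hSdef, Submodule.map_le_iff_le_comap]
    exact torsion_le_comap_torsion π
  -- Step 1 : #T(B) = #T(A) * #S
  have hmaphA : TA.map h ≤ TB := by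
    rw [Submodule.map_le_iff_le_comap]; exact torsion_le_comap_torsion h
  have step1 : Nat.card TB = Nat.card TA * Nat.card S := by
    have hcard := aux_card_eq_card_ker_mul_card_range (π.domRestrict TB)
    rw [LinearMap.range_domRestrict] at hcard
    have hker : LinearMap.ker (π.domRestrict TB) = (TA.map h).comap TB.subtype := by
      ext ⟨x, hx⟩
      simp only [LinearMap.mem_ker, LinearMap.domRestrict_apply, Submodule.mem_comap,
        Submodule.coe_subtype]
      constructor
      · intro hx0
        have : x ∈ LinearMap.range h := by rw [hex]; exact hx0
        obtain ⟨a, rfl⟩ := this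
        refine Submodule.mem_map.mpr ⟨a, ?_, rfl⟩
        obtain ⟨c, hc⟩ := hx
        exact ⟨c, hinj (by rw [Submonoid.smul_def] at hc ⊢; rw [map_smul, hc, map_zero])⟩
      · rintro hmem
        obtain ⟨a, _, rfl⟩ := Submodule.mem_map.mp hmem
        have : h a ∈ LinearMap.ker π := by rw [← hex]; exact ⟨a, rfl⟩
        exact this
    have e1 : (LinearMap.ker (π.domRestrict TB)) ≃ₗ[R] TA.map h := by
      rw [hker]; exact Submodule.comapSubtypeEquivOfLe hmaphA
    have e2 : TA ≃ₗ[R] TA.map h := Submodule.equivMapOfInjective h hinj TA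
    rw [hcard, Nat.card_congr e1.toEquiv, ← Nat.card_congr e2.toEquiv]
  -- the cokernel of the induced map is isomorphic to C ⧸ S
  set Q := (B ⧸ TB) ⧸ LinearMap.range (inducedTorsionFree p h) with hQ
  set W : Submodule R B := LinearMap.range h ⊔ TB with hW
  have hrangeInd : LinearMap.range (inducedTorsionFree p h)
      = (LinearMap.range h).map TB.mkQ := by
    rw [inducedTorsionFree, Submodule.mapQ, Submodule.range_liftQ, LinearMap.range_comp]
  have eQ : Q ≃ₗ[R] C ⧸ S := by
    set ψ : B →ₗ[R] Q := (LinearMap.range (inducedTorsionFree p h)).mkQ.comp TB.mkQ with hψ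
    have hψsurj : Function.Surjective ψ := fun y => by
      obtain ⟨z, rfl⟩ := (LinearMap.range (inducedTorsionFree p h)).mkQ_surjective y
      obtain ⟨x, rfl⟩ := TB.mkQ_surjective z
      exact ⟨x, rfl⟩
    have hkerψ : LinearMap.ker ψ = W := by
      rw [hψ, LinearMap.ker_comp, Submodule.ker_mkQ, hrangeInd, Submodule.comap_map_eq,
        Submodule.ker_mkQ]
    set φ : B →ₗ[R] C ⧸ S := S.mkQ.comp π with hφ
    have hφsurj : Function.Surjective φ := (S.mkQ_surjective).comp hsurj
    have hkerφ : LinearMap.ker φ = W := by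
      rw [hφ, LinearMap.ker_comp, Submodule.ker_mkQ, hSdef, Submodule.comap_map_eq, ← hex,
        sup_comm]
    exact ((Submodule.quotEquivOfEq W _ hkerψ.symm).trans
        (ψ.quotKerEquivOfSurjective hψsurj)).symm.trans
      ((Submodule.quotEquivOfEq W _ hkerφ.symm).trans (φ.quotKerEquivOfSurjective hφsurj))
  -- torsion of C ⧸ S is the image of T(C)
  have htorsCS : TC.map S.mkQ = Submodule.torsion R (C ⧸ S) := by
    apply le_antisymm
    · rw [Submodule.map_le_iff_le_comap]; exact torsion_le_comap_torsion S.mkQ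
    · intro y hy
      obtain ⟨x, rfl⟩ := S.mkQ_surjective y
      obtain ⟨a, ha⟩ := hy
      have hax : (a : R) • x ∈ S := by
        rw [← Submodule.Quotient.mk_eq_zero]
        rw [Submonoid.smul_def] at ha
        simpa using ha
      obtain ⟨b, hb⟩ := hS hax
      have hxT : x ∈ TC := by
        refine ⟨b * a, ?_⟩
        rw [Submonoid.smul_def] at hb ⊢
        rw [Submonoid.coe_mul, mul_smul]
        exact hb
      exact Submodule.mem_map.mpr ⟨x, hxT, rfl⟩
  -- Step 2 : #T(C) = #S * #T(Q)
  have step2 : Nat.card TC = Nat.card S *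
      Nat.card (Submodule.torsion R Q) := by
    have hcard := aux_card_eq_card_ker_mul_card_range (S.mkQ.domRestrict TC)
    rw [LinearMap.range_domRestrict] at hcard
    have hker : LinearMap.ker (S.mkQ.domRestrict TC) = S.comap TC.subtype := by
      ext ⟨x, hx⟩
      simp only [LinearMap.mem_ker, LinearMap.domRestrict_apply, Submodule.mem_comap,
        Submodule.coe_subtype, Submodule.mkQ_apply, Submodule.Quotient.mk_eq_zero]
    have e1 : (LinearMap.ker (S.mkQ.domRestrict TC)) ≃ₗ[R] S := by
      rw [hker]; exact Submodule.comapSubtypeEquivOfLe hS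
    rw [hcard, Nat.card_congr e1.toEquiv, htorsCS,
      ← Nat.card_congr (torsionEquivOfLinearEquiv eQ)]
  rw [step2, step1, mul_comm (Nat.card S) _, ← mul_assoc, mul_comm (Nat.card TA) _,
    mul_assoc, mul_comm (Nat.card TA) (Nat.card S)]
end

section
/- Let B be a cofinitely generated ℤ_p-module with finite residual quotient, and let γ act on B as an endomorphism such that the kernel of (γ − 1) on B is finite. Then the maximal divisible submodule B_div is contained in (γ−1)B, and consequently #(B/(γ−1)B) ≤ [B : B_div]. -/
open LinearMap

private lemma card_dom_eq_card_ker_mul_card_range {R M N : Type*} [Ring R]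
    [AddCommGroup M] [Module R M] [AddCommGroup N] [Module R N] (f : M →ₗ[R] N) :
    Nat.card M = Nat.card (ker f) * Nat.card (range f) := by
  rw [Submodule.card_eq_card_quotient_mul_card (ker f), mul_comm,
    Nat.card_congr f.quotKerEquivRange.toEquiv, mul_comm]

private lemma finite_of_finite_ker_of_finite_range {R M N : Type*} [Ring R]
    [AddCommGroup M] [Module R M] [AddCommGroup N] [Module R N] (f : M →ₗ[R] N)
    (h1 : Finite (ker f)) (h2 : Finite (range f)) : Finite M := by
  have hq : Finite (M ⧸ ker f) := Finite.of_equiv _ f.quotKerEquivRange.symm.toEquiv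
  haveI : Finite (M ⧸ (ker f).toAddSubgroup) := hq
  haveI : Finite ((ker f).toAddSubgroup) := h1
  exact Finite.of_equiv _
    (AddSubgroup.addGroupEquivQuotientProdAddSubgroup (s := (ker f).toAddSubgroup)).symm

private lemma finite_of_submodule_le {R M : Type*} [Ring R] [AddCommGroup M] [Module R M]
    {S T : Submodule R M} (h : S ≤ T) (hT : Finite T) : Finite S :=
  Finite.of_injective (Submodule.inclusion h) (Submodule.inclusion_injective h)

private lemma nat_le_of_pow_le_mul {q q' c : ℕ} (hq' : 0 < q')
    (h : ∀ n : ℕ, q ^ n ≤ c * q' ^ n) : q ≤ q' := by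
  by_contra hlt
  push_neg at hlt
  have h1 : (1 : ℝ) < (q : ℝ) / q' := by
    rw [lt_div_iff₀ (by exact_mod_cast hq')]
    exact_mod_cast by simpa using hlt
  obtain ⟨n, hn⟩ := pow_unbounded_of_one_lt (c : ℝ) h1
  have h2 : ((q : ℝ) / q') ^ n ≤ c := by
    rw [div_pow, div_le_iff₀ (by positivity)]
    exact_mod_cast h n
  linarith



/-- The maximal `p`-divisible submodule of a `ℤ_p`-module contained in a submodule `N`. -/
noncomputable def maxDivIn (p : ℕ) [Fact p.Prime] {M : Type*} [AddCommGroup M] [Module ℤ_[p] M]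
    (N : Submodule ℤ_[p] M) : Submodule ℤ_[p] M :=
  sSup {S | S ≤ N ∧ ∀ x ∈ S, ∃ y ∈ S, (p : ℤ_[p]) • y = x}

/-- Let `B` be a cofinitely generated `ℤ_p`-module (`p`-power torsion with finite
`p`-torsion) with finite residual quotient `B/B_div`, and let `φ = γ − 1` be an
endomorphism of `B` with finite kernel.  Then the maximal divisible submodule `B_div` is
contained in `(γ−1)B`, and consequently `#(B/(γ−1)B) ≤ [B : B_div]`. -/
theorem divisible_le_range_of_finite_ker (p : ℕ) [Fact p.Prime] {B : Type*}
    [AddCommGroup B] [Module ℤ_[p] B]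
    (htors : ∀ x : B, ∃ k : ℕ, (p : ℤ_[p]) ^ k • x = 0)
    (hptors : Finite ↥(LinearMap.ker (LinearMap.lsmul ℤ_[p] B (p : ℤ_[p]))))
    (hres : Finite (B ⧸ maxDivIn p (⊤ : Submodule ℤ_[p] B)))
    (φ : B →ₗ[ℤ_[p]] B) (hker : Finite ↥(LinearMap.ker φ)) :
    maxDivIn p (⊤ : Submodule ℤ_[p] B) ≤ LinearMap.range φ ∧
    Nat.card (B ⧸ LinearMap.range φ) ≤
      Nat.card (B ⧸ maxDivIn p (⊤ : Submodule ℤ_[p] B)) := by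
  classical
  set D : Submodule ℤ_[p] B := maxDivIn p (⊤ : Submodule ℤ_[p] B) with hDdef
  set s : Set (Submodule ℤ_[p] B) :=
    {S | S ≤ ⊤ ∧ ∀ x ∈ S, ∃ y ∈ S, (p : ℤ_[p]) • y = x} with hs
  have hDs : D = sSup s := rfl
  -- D is divisible
  have hdiv : ∀ x ∈ D, ∃ y ∈ D, (p : ℤ_[p]) • y = x := by
    intro x hx
    rw [hDs, sSup_eq_iSup'] at hx
    refine Submodule.iSup_induction (motive := fun z => ∃ y ∈ D, (p : ℤ_[p]) • y = z) _ hx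
      ?_ ⟨0, zero_mem _, smul_zero _⟩ ?_
    · rintro ⟨S, hS⟩ z hzS
      obtain ⟨y, hy, hyz⟩ := hS.2 z hzS
      exact ⟨y, hDs ▸ le_sSup hS hy, hyz⟩
    · rintro a b ⟨x1, hx1, rfl⟩ ⟨x2, hx2, rfl⟩
      exact ⟨x1 + x2, add_mem hx1 hx2, smul_add _ _ _⟩
  -- finiteness of p^k torsion
  have hKfin : ∀ k : ℕ, Finite ↥(ker (lsmul ℤ_[p] B ((p : ℤ_[p]) ^ k))) := by
    intro k
    induction k with
    | zero =>
      have hbot : ker (lsmul ℤ_[p] B ((p : ℤ_[p]) ^ 0)) = ⊥ := by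
        ext x; simp [LinearMap.mem_ker]
      rw [hbot]; infer_instance
    | succ k ih =>
      set f : ↥(ker (lsmul ℤ_[p] B ((p : ℤ_[p]) ^ (k + 1)))) →ₗ[ℤ_[p]] B :=
        (lsmul ℤ_[p] B (p : ℤ_[p])) ∘ₗ (Submodule.subtype _) with hf
      refine finite_of_finite_ker_of_finite_range f ?_ ?_
      · refine Finite.of_injective
          (fun x : ↥(ker f) => (⟨x.1.1, x.2⟩ : ↥(ker (lsmul ℤ_[p] B (p : ℤ_[p]))))) ?_
        intro a b hab
        simp only [Subtype.mk.injEq] at hab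
        exact Subtype.ext (Subtype.ext (by have h := congrArg Subtype.val hab; exact h))
      · refine finite_of_submodule_le (T := ker (lsmul ℤ_[p] B ((p : ℤ_[p]) ^ k))) ?_ ih
        rintro y ⟨x, rfl⟩
        have hx : (p : ℤ_[p]) ^ (k + 1) • (x : B) = 0 := x.2
        refine LinearMap.mem_ker.mpr ?_
        have : f x = (p : ℤ_[p]) • (x : B) := rfl
        rw [this, lsmul_apply, smul_smul, ← pow_succ]
        exact hx
  -- cardinality of p^k torsion in a divisible submodule
  have hcard : ∀ (A : Submodule ℤ_[p] B), (∀ x ∈ A, ∃ y ∈ A, (p : ℤ_[p]) • y = x) →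
      ∀ k : ℕ, Nat.card ↥(A ⊓ ker (lsmul ℤ_[p] B ((p : ℤ_[p]) ^ k)))
        = (Nat.card ↥(A ⊓ ker (lsmul ℤ_[p] B ((p : ℤ_[p]) ^ 1)))) ^ k := by
    intro A hA k
    induction k with
    | zero =>
      have hbot : A ⊓ ker (lsmul ℤ_[p] B ((p : ℤ_[p]) ^ 0)) = ⊥ := by
        ext x
        simp only [Submodule.mem_inf, LinearMap.mem_ker, lsmul_apply, pow_zero, one_smul,
          Submodule.mem_bot]
        exact ⟨fun h => h.2, fun h => ⟨h ▸ zero_mem A, h⟩⟩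
      rw [hbot, pow_zero]
      exact Nat.card_unique
    | succ k ih =>
      have hmapsto : ∀ x ∈ A ⊓ ker (lsmul ℤ_[p] B ((p : ℤ_[p]) ^ (k + 1))),
          lsmul ℤ_[p] B (p : ℤ_[p]) x ∈ A ⊓ ker (lsmul ℤ_[p] B ((p : ℤ_[p]) ^ k)) := by
        intro x hx
        rw [Submodule.mem_inf] at hx
        have hxk' : (p : ℤ_[p]) ^ (k + 1) • x = 0 := hx.2
        rw [Submodule.mem_inf]
        refine ⟨?_, ?_⟩
        · exact Submodule.smul_mem _ _ hx.1
        · rw [LinearMap.mem_ker, lsmul_apply, lsmul_apply, smul_smul, ← pow_succ]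
          exact hxk'
      set g := (lsmul ℤ_[p] B (p : ℤ_[p])).restrict hmapsto with hg
      have hgsurj : Function.Surjective g := by
        rintro ⟨x, hx⟩
        rw [Submodule.mem_inf] at hx
        obtain ⟨y, hyA, hyx⟩ := hA x hx.1
        have hxk' : (p : ℤ_[p]) ^ k • x = 0 := hx.2
        have hy : y ∈ A ⊓ ker (lsmul ℤ_[p] B ((p : ℤ_[p]) ^ (k + 1))) := by
          rw [Submodule.mem_inf]
          refine ⟨hyA, ?_⟩
          rw [LinearMap.mem_ker, lsmul_apply, pow_succ, mul_smul, hyx]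
          exact hxk'
        exact ⟨⟨y, hy⟩, Subtype.ext (by simp [hg, LinearMap.restrict_apply, hyx])⟩
      have hcardrange : Nat.card ↥(range g)
          = Nat.card ↥(A ⊓ ker (lsmul ℤ_[p] B ((p : ℤ_[p]) ^ k))) := by
        rw [LinearMap.range_eq_top.mpr hgsurj]
        exact Nat.card_congr Submodule.topEquiv.toEquiv
      have hker_smul : ∀ x : ↥(ker g), (p : ℤ_[p]) • (x.1.1 : B) = 0 := by
        intro x
        have h1 : g x.1 = 0 := x.2
        have h2 := congrArg Subtype.val h1
        rw [LinearMap.restrict_coe_apply] at h2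
        simpa using h2
      have hkerequiv : ↥(ker g) ≃ ↥(A ⊓ ker (lsmul ℤ_[p] B ((p : ℤ_[p]) ^ 1))) := by
        refine ⟨fun x => ⟨x.1.1, Submodule.mem_inf.mpr ⟨(Submodule.mem_inf.mp x.1.2).1, ?_⟩⟩,
          fun x => ⟨⟨x.1, Submodule.mem_inf.mpr ⟨(Submodule.mem_inf.mp x.2).1, ?_⟩⟩, ?_⟩,
          fun x => Subtype.ext (Subtype.ext rfl), fun x => Subtype.ext rfl⟩
        · rw [LinearMap.mem_ker, lsmul_apply, pow_one]
          exact hker_smul x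
        · have hx0 : (p : ℤ_[p]) • (x.1 : B) = 0 := by
            have := (Submodule.mem_inf.mp x.2).2
            rw [LinearMap.mem_ker, lsmul_apply] at this
            simpa using this
          rw [LinearMap.mem_ker, lsmul_apply, pow_succ, mul_smul, hx0, smul_zero]
        · have hx0 : (p : ℤ_[p]) • (x.1 : B) = 0 := by
            have := (Submodule.mem_inf.mp x.2).2
            rw [LinearMap.mem_ker, lsmul_apply] at this
            simpa using this
          exact LinearMap.mem_ker.mpr
            (Subtype.ext (by rw [LinearMap.restrict_coe_apply]; simpa using hx0))
      rw [card_dom_eq_card_ker_mul_card_range g, hcardrange, ih,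
        Nat.card_congr hkerequiv]
      ring
  -- the image A' = φ(D)
  set A' : Submodule ℤ_[p] B := Submodule.map φ D with hA'
  have hA'div : ∀ x ∈ A', ∃ y ∈ A', (p : ℤ_[p]) • y = x := by
    rintro x ⟨d, hd, rfl⟩
    obtain ⟨y, hyD, hyd⟩ := hdiv d hd
    exact ⟨φ y, Submodule.mem_map_of_mem hyD, by rw [← map_smul, hyd]⟩
  have hA'le : A' ≤ D := by
    rw [hDs]
    exact le_sSup ⟨le_top, hA'div⟩
  -- finiteness of the relevant torsion submodules
  have hfinD : ∀ k, Finite ↥(D ⊓ ker (lsmul ℤ_[p] B ((p : ℤ_[p]) ^ k))) :=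
    fun k => finite_of_submodule_le inf_le_right (hKfin k)
  have hfinA' : ∀ k, Finite ↥(A' ⊓ ker (lsmul ℤ_[p] B ((p : ℤ_[p]) ^ k))) :=
    fun k => finite_of_submodule_le inf_le_right (hKfin k)
  set q : ℕ := Nat.card ↥(D ⊓ ker (lsmul ℤ_[p] B ((p : ℤ_[p]) ^ 1))) with hq
  set q' : ℕ := Nat.card ↥(A' ⊓ ker (lsmul ℤ_[p] B ((p : ℤ_[p]) ^ 1))) with hq'
  set c : ℕ := Nat.card ↥(ker φ) with hc
  -- the inequality q^n ≤ c * q'^n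
  have hqn : ∀ n : ℕ, q ^ n ≤ c * q' ^ n := by
    intro n
    have hmapsto : ∀ x ∈ D ⊓ ker (lsmul ℤ_[p] B ((p : ℤ_[p]) ^ n)),
        φ x ∈ A' ⊓ ker (lsmul ℤ_[p] B ((p : ℤ_[p]) ^ n)) := by
      intro x hx
      rw [Submodule.mem_inf] at hx
      have hxk' : (p : ℤ_[p]) ^ n • x = 0 := hx.2
      rw [Submodule.mem_inf]
      refine ⟨Submodule.mem_map_of_mem hx.1, ?_⟩
      rw [LinearMap.mem_ker, lsmul_apply, ← map_smul, hxk', map_zero]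
    set h := φ.restrict hmapsto with hh
    haveI := hfinD n
    haveI := hfinA' n
    haveI := hker
    have hkerle : Nat.card ↥(ker h) ≤ c := by
      have hmem : ∀ x : ↥(ker h), (x.1.1 : B) ∈ ker φ := by
        intro x
        have h1 : h x.1 = 0 := x.2
        have h2 := congrArg Subtype.val h1
        rw [LinearMap.restrict_coe_apply] at h2
        simpa [LinearMap.mem_ker] using h2
      refine Nat.card_le_card_of_injective
        (fun x : ↥(ker h) => (⟨x.1.1, hmem x⟩ : ↥(ker φ))) ?_
      intro a b hab
      simp only [Subtype.mk.injEq] at hab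
      exact Subtype.ext (Subtype.ext hab)
    have hrangele : Nat.card ↥(range h)
        ≤ Nat.card ↥(A' ⊓ ker (lsmul ℤ_[p] B ((p : ℤ_[p]) ^ n))) :=
      Nat.card_le_card_of_injective (fun x : ↥(range h) => x.1) Subtype.coe_injective
    calc q ^ n = Nat.card ↥(D ⊓ ker (lsmul ℤ_[p] B ((p : ℤ_[p]) ^ n))) :=
          (hcard D hdiv n).symm
      _ = Nat.card ↥(ker h) * Nat.card ↥(range h) := card_dom_eq_card_ker_mul_card_range h
      _ ≤ c * Nat.card ↥(A' ⊓ ker (lsmul ℤ_[p] B ((p : ℤ_[p]) ^ n))) :=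
          Nat.mul_le_mul hkerle hrangele
      _ = c * q' ^ n := by rw [hcard A' hA'div n]
  -- q = q'
  haveI := hfinD 1
  haveI := hfinA' 1
  have hq'pos : 0 < q' := Nat.card_pos
  have hqle : q ≤ q' := nat_le_of_pow_le_mul hq'pos hqn
  have hq'le : q' ≤ q :=
    Nat.card_le_card_of_injective (Submodule.inclusion (inf_le_inf_right _ hA'le))
      (Submodule.inclusion_injective _)
  have hqq' : q = q' := le_antisymm hqle hq'le
  -- torsion equality
  have htorseq : ∀ k, ∀ x ∈ D ⊓ ker (lsmul ℤ_[p] B ((p : ℤ_[p]) ^ k)),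
      x ∈ A' ⊓ ker (lsmul ℤ_[p] B ((p : ℤ_[p]) ^ k)) := by
    intro k
    haveI := hfinD k
    have hle : A' ⊓ ker (lsmul ℤ_[p] B ((p : ℤ_[p]) ^ k))
        ≤ D ⊓ ker (lsmul ℤ_[p] B ((p : ℤ_[p]) ^ k)) := inf_le_inf_right _ hA'le
    have hcards : Nat.card ↥(A' ⊓ ker (lsmul ℤ_[p] B ((p : ℤ_[p]) ^ k)))
        = Nat.card ↥(D ⊓ ker (lsmul ℤ_[p] B ((p : ℤ_[p]) ^ k))) := by
      rw [hcard A' hA'div k, hcard D hdiv k, ← hq, ← hq', hqq']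
    have hbij : Function.Bijective (Submodule.inclusion hle) :=
      (Nat.bijective_iff_injective_and_card _).mpr
        ⟨Submodule.inclusion_injective _, hcards⟩
    intro x hx
    obtain ⟨y, hy⟩ := hbij.2 ⟨x, hx⟩
    have : (y : B) = x := congrArg Subtype.val hy
    exact this ▸ y.2
  -- conclusion part 1
  have hle : D ≤ range φ := by
    intro x hx
    obtain ⟨k, hk⟩ := htors x
    have hxk : x ∈ D ⊓ ker (lsmul ℤ_[p] B ((p : ℤ_[p]) ^ k)) :=
      Submodule.mem_inf.mpr ⟨hx, by rw [LinearMap.mem_ker, lsmul_apply]; exact hk⟩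
    have := (Submodule.mem_inf.mp (htorseq k x hxk)).1
    obtain ⟨d, _, rfl⟩ := this
    exact LinearMap.mem_range_self φ d
  refine ⟨hle, ?_⟩
  -- conclusion part 2
  have hcomap : D ≤ Submodule.comap LinearMap.id (range φ) := by
    simpa using hle
  haveI : Finite (B ⧸ D) := hres
  set π := Submodule.mapQ D (range φ) LinearMap.id hcomap with hπ
  have hπsurj : Function.Surjective π := by
    intro y
    obtain ⟨x, rfl⟩ := Submodule.Quotient.mk_surjective _ y
    exact ⟨Submodule.Quotient.mk x, by simp [hπ, Submodule.mapQ_apply]⟩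
  exact Nat.card_le_card_of_surjective π hπsurj
end
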